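/- Let φ be an integrable real random variable on a probability space (X, m). Then for all y ∈ ℝ and δ > 0, ∫_{−δ}^{δ} t^{−4} · E[ |tφ| · 1_{|tφ|>1} ] · |sin(t y)| dt ≤ 4 E[φ²] · |y|, provided φ ∈ L²(m). -/

import Mathlib

open MeasureTheory Set
open scoped ENNReal

lemma lintegral_Ioi_inv_sq {a : ℝ} (ha : 0 < a) :
    ∫⁻ t in Set.Ioi a, ENNReal.ofReal (1 / t ^ 2) = ENNReal.ofReal (1 / a) := by
  have hcongr : ∀ t ∈ Set.Ioi a, (1 : ℝ) / t ^ 2 = t ^ (-2 : ℝ) := by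
    intro t ht
    rw [Real.rpow_neg (le_of_lt (ha.trans ht)), Real.rpow_two]
    simp [one_div]
  have hint : IntegrableOn (fun t : ℝ => 1 / t ^ 2) (Set.Ioi a) := by
    refine (integrableOn_Ioi_rpow_of_lt (show (-2:ℝ) < -1 by norm_num) ha).congr_fun ?_ measurableSet_Ioi
    exact fun t ht => (hcongr t ht).symm
  rw [← ofReal_integral_eq_lintegral_ofReal hint]
  · congr 1
    rw [setIntegral_congr_fun measurableSet_Ioi hcongr, integral_Ioi_rpow_of_lt (show (-2:ℝ) < -1 by norm_num) ha]
    norm_num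
    rw [Real.rpow_neg ha.le, Real.rpow_one]
  · filter_upwards [ae_restrict_mem measurableSet_Ioi] with t ht
    positivity

lemma lintegral_if_inv_sq_bound (c : ℝ) :
    ∫⁻ t : ℝ, ENNReal.ofReal (if 1 < |t * c| then 1 / t ^ 2 else 0)
      ≤ ENNReal.ofReal (2 * |c|) := by
  by_cases hc : c = 0
  · simp only [hc, mul_zero, abs_zero]
    norm_num
  · have habs : 0 < |c| := abs_pos.2 hc
    set a : ℝ := |c|⁻¹ with ha_def
    have ha : 0 < a := inv_pos.2 habs
    have hiff : ∀ t : ℝ, (1 < |t * c|) ↔ t ∈ Iio (-a) ∪ Ioi a := by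
      intro t
      have h1 : (1 < |t * c|) ↔ a < |t| := by
        rw [abs_mul, ha_def, inv_lt_iff_one_lt_mul₀ habs, mul_comm]
      rw [h1, lt_abs]
      simp [Set.mem_union, Set.mem_Iio, Set.mem_Ioi, lt_neg, or_comm]
    have hrw : ∀ t : ℝ, ENNReal.ofReal (if 1 < |t * c| then 1 / t ^ 2 else 0)
        = (Iio (-a) ∪ Ioi a).indicator (fun t => ENNReal.ofReal (1 / t ^ 2)) t := by
      intro t
      rw [Set.indicator_apply]
      by_cases h : t ∈ Iio (-a) ∪ Ioi a
      · rw [if_pos h, if_pos ((hiff t).2 h)]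
      · rw [if_neg h, if_neg (fun hh => h ((hiff t).1 hh)), ENNReal.ofReal_zero]
    rw [lintegral_congr hrw,
      lintegral_indicator (measurableSet_Iio.union measurableSet_Ioi) (fun t => ENNReal.ofReal (1 / t ^ 2)),
      lintegral_union measurableSet_Ioi
        ((Iic_disjoint_Ioi (le_refl a)).mono_left (Iio_subset_Iic_self.trans
          (Iic_subset_Iic.2 (by linarith))))]
    have hneg : ∫⁻ t in Iio (-a), ENNReal.ofReal (1 / t ^ 2)
        = ∫⁻ t in Ioi a, ENNReal.ofReal (1 / t ^ 2) := by
      have hmp := (Measure.measurePreserving_neg (volume : Measure ℝ))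
      have := hmp.setLIntegral_comp_preimage_emb (Homeomorph.neg ℝ).measurableEmbedding
        (fun t => ENNReal.ofReal (1 / t ^ 2)) (Iio (-a))
      have hpre : (fun t : ℝ => -t) ⁻¹' (Iio (-a)) = Ioi a := by
        ext t; simp [neg_lt_neg_iff]
      rw [show (Neg.neg ⁻¹' Iio (-a)) = Ioi a from hpre] at this
      rw [← this]
      simp [neg_sq]
    rw [hneg, lintegral_Ioi_inv_sq ha, ← two_mul, show (1:ℝ)/a = |c| by
      rw [one_div, ha_def, inv_inv]]
    rw [← ENNReal.ofReal_ofNat, ← ENNReal.ofReal_mul (by norm_num)]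

lemma integral_le_toReal_lintegral {α : Type*} [MeasurableSpace α] (ν : Measure α) (f : α → ℝ)
    (hf : 0 ≤ᵐ[ν] f) : ∫ a, f a ∂ν ≤ (∫⁻ a, ENNReal.ofReal (f a) ∂ν).toReal := by
  by_cases h : Integrable f ν
  · rw [integral_eq_lintegral_of_nonneg_ae hf h.aestronglyMeasurable]
  · rw [integral_undef h]; exact ENNReal.toReal_nonneg

lemma large_part_bound_aux {X : Type*} [MeasurableSpace X] (μ : Measure X)
    [IsProbabilityMeasure μ] (φ : X → ℝ) (hm : Measurable φ) (hφ2 : MemLp φ 2 μ)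
    (y δ : ℝ) (hδ : 0 < δ) :
    (∫ t in (-δ)..δ,
        (1 / t ^ 4) * (∫ x, (if 1 < |t * φ x| then |t * φ x| else 0) ∂μ)
          * |Real.sin (t * y)|)
      ≤ 4 * (∫ x, (φ x) ^ 2 ∂μ) * |y| := by
  have hE : 0 ≤ ∫ x, (φ x) ^ 2 ∂μ := integral_nonneg fun x => sq_nonneg _
  set g : ℝ → X → ℝ := fun t x => if 1 < |t * φ x| then |t * φ x| else 0 with hg_def
  have hg0 : ∀ t x, 0 ≤ g t x := by
    intro t x; simp only [hg_def]; split_ifs <;> positivity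
  have hgmeas : ∀ t, Measurable (g t) := by
    intro t
    exact Measurable.ite (measurableSet_lt measurable_const ((measurable_const.mul hm).abs))
      ((measurable_const.mul hm).abs) measurable_const
  set h : ℝ → ℝ := fun t => (1 / t ^ 4) * (∫ x, g t x ∂μ) * |Real.sin (t * y)| with hh_def
  have h0 : ∀ t, 0 ≤ h t := fun t =>
    mul_nonneg (mul_nonneg (by positivity) (integral_nonneg (hg0 t))) (abs_nonneg _)
  rw [intervalIntegral.integral_of_le (by linarith : -δ ≤ δ)]
  have step1 : ∫ t in Ioc (-δ) δ, h t ≤ (∫⁻ t in Ioc (-δ) δ, ENNReal.ofReal (h t)).toReal :=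
    integral_le_toReal_lintegral _ _ (Filter.Eventually.of_forall h0)
  refine step1.trans ?_
  apply ENNReal.toReal_le_of_le_ofReal (by positivity)
  -- the ℝ≥0∞-valued bound function
  set B : ℝ → X → ℝ≥0∞ := fun t x =>
    ENNReal.ofReal (|y| * |φ x| * (if 1 < |t * φ x| then 1 / t ^ 2 else 0)) with hB_def
  -- key pointwise real inequality
  have key : ∀ t x, (1 / t ^ 4) * g t x * |Real.sin (t * y)|
      ≤ |y| * |φ x| * (if 1 < |t * φ x| then 1 / t ^ 2 else 0) := by
    intro t x
    by_cases hc : 1 < |t * φ x|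
    · have ht : t ≠ 0 := by
        rintro rfl; rw [zero_mul, abs_zero] at hc; linarith
      rw [if_pos hc, hg_def]
      simp only [if_pos hc]
      have hsin : |Real.sin (t * y)| ≤ |t| * |y| := by
        refine (Real.abs_sin_le_abs).trans ?_
        rw [abs_mul]
      have habs : |t * φ x| = |t| * |φ x| := abs_mul t (φ x)
      have h1 : (1 / t ^ 4) * |t * φ x| * |Real.sin (t * y)|
          ≤ (1 / t ^ 4) * (|t| * |φ x|) * (|t| * |y|) := by
        rw [habs]
        have hnn : 0 ≤ (1 / t ^ 4) * (|t| * |φ x|) := by positivity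
        exact mul_le_mul_of_nonneg_left hsin hnn
      refine h1.trans (le_of_eq ?_)
      have ht2 : |t| * |t| = t ^ 2 := by rw [abs_mul_abs_self, sq]
      have e : 1 / t ^ 4 * (|t| * |φ x|) * (|t| * |y|) = t ^ 2 * (|φ x| * |y|) / t ^ 4 := by
        rw [← ht2]; ring
      rw [e]
      field_simp
    · rw [if_neg hc, hg_def]
      simp only [if_neg hc]
      simp
  -- Step A: pointwise bound of the t-integrand by an x-lintegral
  have stepA : ∫⁻ t in Ioc (-δ) δ, ENNReal.ofReal (h t)
      ≤ ∫⁻ t in Ioc (-δ) δ, ∫⁻ x, B t x ∂μ := by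
    refine lintegral_mono fun t => ?_
    have hL : ∫ x, g t x ∂μ = (∫⁻ x, ENNReal.ofReal (g t x) ∂μ).toReal :=
      integral_eq_lintegral_of_nonneg_ae (Filter.Eventually.of_forall (hg0 t))
        (hgmeas t).aestronglyMeasurable
    have e1 : ENNReal.ofReal (h t)
        = ENNReal.ofReal (1 / t ^ 4) * ENNReal.ofReal ((∫⁻ x, ENNReal.ofReal (g t x) ∂μ).toReal)
          * ENNReal.ofReal |Real.sin (t * y)| := by
      rw [hh_def]
      simp only
      rw [hL, ENNReal.ofReal_mul (by positivity), ENNReal.ofReal_mul (by positivity)]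
    rw [e1]
    have e2 : ENNReal.ofReal (1 / t ^ 4) * ENNReal.ofReal ((∫⁻ x, ENNReal.ofReal (g t x) ∂μ).toReal)
          * ENNReal.ofReal |Real.sin (t * y)|
        ≤ ENNReal.ofReal (1 / t ^ 4) * (∫⁻ x, ENNReal.ofReal (g t x) ∂μ)
          * ENNReal.ofReal |Real.sin (t * y)| := by
      gcongr
      exact ENNReal.ofReal_toReal_le
    refine e2.trans ?_
    rw [← lintegral_const_mul' _ _ ENNReal.ofReal_ne_top,
      ← lintegral_mul_const' _ _ ENNReal.ofReal_ne_top]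
    refine lintegral_mono fun x => ?_
    rw [← ENNReal.ofReal_mul (by positivity), ← ENNReal.ofReal_mul (by positivity)]
    exact ENNReal.ofReal_le_ofReal (key t x)
  refine stepA.trans ?_
  -- Step B: Tonelli swap
  have hBmeas : Measurable (Function.uncurry B) := by
    apply ENNReal.measurable_ofReal.comp
    apply Measurable.mul
    · exact (measurable_const.mul ((hm.comp measurable_snd).abs))
    · refine Measurable.ite ?_ ?_ measurable_const
      · exact measurableSet_lt measurable_const
          ((measurable_fst.mul (hm.comp measurable_snd)).abs)
      · exact (measurable_fst.pow measurable_const).const_div 1 |>.comp measurable_id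
  have hswap : ∫⁻ t in Ioc (-δ) δ, ∫⁻ x, B t x ∂μ
      = ∫⁻ x, (∫⁻ t in Ioc (-δ) δ, B t x) ∂μ :=
    lintegral_lintegral_swap hBmeas.aemeasurable
  rw [hswap]
  -- Step C: inner bound in t, then integrate in x
  have stepC : ∀ x, ∫⁻ t in Ioc (-δ) δ, B t x ≤ ENNReal.ofReal (2 * |y| * φ x ^ 2) := by
    intro x
    have e3 : ∀ t : ℝ, B t x = ENNReal.ofReal (|y| * |φ x|)
        * ENNReal.ofReal (if 1 < |t * φ x| then 1 / t ^ 2 else 0) := by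
      intro t
      rw [hB_def]
      simp only
      rw [ENNReal.ofReal_mul (by positivity)]
    calc ∫⁻ t in Ioc (-δ) δ, B t x
        = ENNReal.ofReal (|y| * |φ x|)
          * ∫⁻ t in Ioc (-δ) δ, ENNReal.ofReal (if 1 < |t * φ x| then 1 / t ^ 2 else 0) := by
          rw [← lintegral_const_mul' _ _ ENNReal.ofReal_ne_top]
          exact lintegral_congr fun t => e3 t
      _ ≤ ENNReal.ofReal (|y| * |φ x|) * ENNReal.ofReal (2 * |φ x|) := by
          gcongr
          exact (setLIntegral_le_lintegral _ _).trans (lintegral_if_inv_sq_bound (φ x))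
      _ = ENNReal.ofReal (2 * |y| * φ x ^ 2) := by
          rw [← ENNReal.ofReal_mul (by positivity)]
          congr 1
          rw [show |y| * |φ x| * (2 * |φ x|) = 2 * |y| * (|φ x| * |φ x|) by ring,
            abs_mul_abs_self, sq]
  have hInt : Integrable (fun x => 2 * |y| * φ x ^ 2) μ := hφ2.integrable_sq.const_mul (2 * |y|)
  calc ∫⁻ x, (∫⁻ t in Ioc (-δ) δ, B t x) ∂μ
      ≤ ∫⁻ x, ENNReal.ofReal (2 * |y| * φ x ^ 2) ∂μ := lintegral_mono fun x => stepC x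
    _ = ENNReal.ofReal (∫ x, 2 * |y| * φ x ^ 2 ∂μ) :=
        (ofReal_integral_eq_lintegral_ofReal hInt
          (Filter.Eventually.of_forall fun x => by positivity)).symm
    _ ≤ ENNReal.ofReal (4 * (∫ x, (φ x) ^ 2 ∂μ) * |y|) := by
        apply ENNReal.ofReal_le_ofReal
        rw [integral_const_mul]
        nlinarith [abs_nonneg y, hE]

theorem large_part_bound {X : Type*} [MeasurableSpace X] (μ : Measure X)
    [IsProbabilityMeasure μ] (φ : X → ℝ) (hφ1 : Integrable φ μ) (hφ2 : MemLp φ 2 μ) :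
    ∀ (y : ℝ) (δ : ℝ), 0 < δ →
      (∫ t in (-δ)..δ,
          (1 / t ^ 4) * (∫ x, (if 1 < |t * φ x| then |t * φ x| else 0) ∂μ)
            * |Real.sin (t * y)|)
        ≤ 4 * (∫ x, (φ x) ^ 2 ∂μ) * |y| := by
  intro y δ hδ
  have hae := hφ1.aestronglyMeasurable.aemeasurable
  obtain ⟨ψ, hψmeas, hψeq⟩ : ∃ ψ : X → ℝ, Measurable ψ ∧ φ =ᵐ[μ] ψ :=
    ⟨hae.mk _, hae.measurable_mk, hae.ae_eq_mk⟩
  have key := large_part_bound_aux μ ψ hψmeas (hφ2.ae_eq hψeq) y δ hδ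
  have h1 : ∀ t : ℝ, ∫ x, (if 1 < |t * φ x| then |t * φ x| else 0) ∂μ
      = ∫ x, (if 1 < |t * ψ x| then |t * ψ x| else 0) ∂μ := fun t =>
    integral_congr_ae (hψeq.mono fun x hx => by simp only []; rw [hx])
  have h2 : ∫ x, (φ x) ^ 2 ∂μ = ∫ x, (ψ x) ^ 2 ∂μ :=
    integral_congr_ae (hψeq.mono fun x hx => by simp only []; rw [hx])
  rw [h2, intervalIntegral.integral_congr (g := fun t =>
    (1 / t ^ 4) * (∫ x, (if 1 < |t * ψ x| then |t * ψ x| else 0) ∂μ) * |Real.sin (t * y)|)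
    (fun t _ => by rw [h1 t])]
  exact key
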